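/- arXiv:2402.02627 — 2 statements merged into one kernel-verified Lean document; each statement's English description precedes it below -/
import Mathlib

section
/- For every deterministic finite automaton M = (Q, Σ, δ, q₀, F) with n states and m input symbols there exists a second-order sigmoid recurrent network with k = n + 1 neurons that robustly simulates the transitions of M: there exist weights W : Fin k → Σ → Fin k → ℝ, biases b : Fin k → ℝ, a state encoding E : Q → (Fin k → ℝ), a designated output neuron index i₀ ∈ Fin k, and a tolerance ε ∈ (0, 1/2), such that (i) for every q ∈ Q, every a ∈ Σ, and every vector h : Fin k → ℝ with ‖h − E q‖_∞ ≤ ε, the updated vector Φ a h defined by (Φ a h) i = σ(∑_{j} (W i a j) · h j + b i), where σ(t) = 1/(1 + exp(−t)), satisfies ‖Φ a h − E (δ q a)‖_∞ ≤ ε, and (ii) (E q) i₀ ≥ 1 − ε whenever q ∈ F and (E q) i₀ ≤ ε whenever q ∉ F. -/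
/-- The logistic sigmoid `σ(t) = 1/(1 + exp(-t))`. -/
noncomputable def logisticSigmoid (t : ℝ) : ℝ := 1 / (1 + Real.exp (-t))

lemma logisticSigmoid_pos (t : ℝ) : 0 < logisticSigmoid t := by
  unfold logisticSigmoid; positivity

lemma logisticSigmoid_lt_one (t : ℝ) : logisticSigmoid t < 1 := by
  unfold logisticSigmoid
  rw [div_lt_one (by positivity)]
  linarith [Real.exp_pos (-t)]

lemma logisticSigmoid_le_exp (t : ℝ) : logisticSigmoid t ≤ Real.exp t := by
  unfold logisticSigmoid
  rw [div_le_iff₀ (by positivity)]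
  have h1 : Real.exp t * Real.exp (-t) = 1 := by rw [← Real.exp_add]; simp
  nlinarith [Real.exp_pos t]

lemma one_sub_logisticSigmoid_le_exp (t : ℝ) : 1 - logisticSigmoid t ≤ Real.exp (-t) := by
  unfold logisticSigmoid
  have hu : (0:ℝ) < 1 + Real.exp (-t) := by positivity
  have h2 : 1 - 1 / (1 + Real.exp (-t)) = Real.exp (-t) / (1 + Real.exp (-t)) := by
    field_simp
    ring
  rw [h2]
  exact div_le_self (Real.exp_pos _).le (by linarith [Real.exp_pos (-t)])

/-- For every DFA `M` with `n` states and `m` input symbols there is a second-order sigmoid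
recurrent network with `k = n + 1` neurons that robustly simulates the transitions of `M`. -/
theorem o2rnn_simulates_dfa
    {Q A : Type} [Fintype Q] [Fintype A] (M : DFA A Q)
    (n m : ℕ) (hn : Fintype.card Q = n) (hm : Fintype.card A = m) :
    ∃ (W : Fin (n + 1) → A → Fin (n + 1) → ℝ) (b : Fin (n + 1) → ℝ)
      (E : Q → (Fin (n + 1) → ℝ)) (i₀ : Fin (n + 1)) (ε : ℝ),
      0 < ε ∧ ε < 1 / 2 ∧
      -- (i) robust one-step simulation of the transition function
      (∀ (q : Q) (a : A) (h : Fin (n + 1) → ℝ), ‖h - E q‖ ≤ ε →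
        ‖(fun i : Fin (n + 1) =>
            logisticSigmoid (∑ j : Fin (n + 1), W i a j * h j + b i)) - E (M.step q a)‖ ≤ ε) ∧
      -- (ii) the output neuron `i₀` separates accepting from rejecting states
      (∀ q : Q, q ∈ M.accept → 1 - ε ≤ E q i₀) ∧
      (∀ q : Q, q ∉ M.accept → E q i₀ ≤ ε) := by
  classical
  have e : Q ≃ Fin n := Fintype.equivFinOfCardEq hn
  set ε : ℝ := 1 / (4 * (n + 1)) with hεdef
  have hn1 : (0:ℝ) < (n:ℝ) + 1 := by positivity
  have hεpos : 0 < ε := by positivity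
  have hεle : ε ≤ 1 / 4 := by
    rw [hεdef, div_le_div_iff₀ (by positivity) (by norm_num)]
    nlinarith [Nat.cast_nonneg (α := ℝ) n]
  set c : ℝ := 2 * Real.log (1 / ε) with hcdef
  have hinv : (4:ℝ) ≤ 1 / ε := by
    rw [le_div_iff₀ hεpos]; nlinarith
  have hlogpos : 0 < Real.log (1 / ε) := Real.log_pos (by linarith)
  have hcpos : 0 < c := by rw [hcdef]; linarith
  have hexp : Real.exp (-(c / 2)) = ε := by
    have h2 : c / 2 = Real.log (1 / ε) := by rw [hcdef]; ring
    rw [h2, Real.exp_neg, Real.exp_log (by positivity), one_div, inv_inv]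
  set E : Q → Fin (n + 1) → ℝ := fun q i =>
    if (i : ℕ) = ((e q : Fin n) : ℕ) then 1
    else if i = Fin.last n then (if q ∈ M.accept then 1 else 0) else 0 with hEdef
  have hE01 : ∀ q i, E q i = 0 ∨ E q i = 1 := by
    intro q i; simp only [hEdef]; split_ifs <;> simp
  set W : Fin (n + 1) → A → Fin (n + 1) → ℝ := fun i a j =>
    if hj : (j : ℕ) < n then 2 * c * E (M.step (e.symm ⟨(j : ℕ), hj⟩) a) i else 0 with hWdef
  refine ⟨W, fun _ => -c, E, Fin.last n, ε, hεpos,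
    lt_of_le_of_lt hεle (by norm_num), ?_, ?_, ?_⟩
  · -- robust simulation
    intro q a h hh
    set t := M.step q a with htdef
    rw [pi_norm_le_iff_of_nonneg hεpos.le]
    intro i
    simp only [Pi.sub_apply]
    rw [Real.norm_eq_abs]
    -- the sum over the one-hot encoding itself
    have hS : ∑ j : Fin (n + 1), W i a j * E q j
        = W i a ((e q).castSucc) * E q ((e q).castSucc) := by
      refine Finset.sum_eq_single _ ?_ ?_
      · intro j _ hj
        by_cases hjn : (j : ℕ) < n
        · have hEz : E q j = 0 := by
            simp only [hEdef]
            rw [if_neg, if_neg]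
            · intro hlast; rw [hlast, Fin.val_last] at hjn; exact absurd hjn (lt_irrefl n)
            · intro hval; exact hj (by ext; simpa using hval)
          rw [hEz, mul_zero]
        · simp only [hWdef]; rw [dif_neg hjn, zero_mul]
      · intro hmem; exact absurd (Finset.mem_univ _) hmem
    have hlt : (((e q).castSucc : Fin (n + 1)) : ℕ) < n := by
      simpa using (e q).isLt
    have hWq : W i a ((e q).castSucc) = 2 * c * E t i := by
      simp only [hWdef]
      rw [dif_pos hlt]
      congr 2
      rw [htdef]
      congr 1
      have hcoe : (⟨(((e q).castSucc : Fin (n + 1)) : ℕ), hlt⟩ : Fin n) = e q := by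
        ext; simp
      rw [hcoe, Equiv.symm_apply_apply]
    have hEq1 : E q ((e q).castSucc) = 1 := by
      simp only [hEdef]
      rw [if_pos]
      simp
    have hS2 : ∑ j : Fin (n + 1), W i a j * E q j = 2 * c * E t i := by
      rw [hS, hWq, hEq1, mul_one]
    -- per-coordinate deviation bound
    have hd : ∀ j, |h j - E q j| ≤ ε := by
      intro j
      have h1 := norm_le_pi_norm (h - E q) j
      simp only [Pi.sub_apply, Real.norm_eq_abs] at h1
      exact le_trans h1 hh
    have hWb : ∀ j, |W i a j| ≤ 2 * c := by
      intro j
      simp only [hWdef]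
      split_ifs with hj
      · rcases hE01 (M.step (e.symm ⟨(j : ℕ), hj⟩) a) i with h0 | h1
        · rw [h0]; simp; positivity
        · rw [h1]; rw [mul_one, abs_of_pos (by positivity)]
      · simp; positivity
    have hD : |∑ j : Fin (n + 1), W i a j * (h j - E q j)| ≤ c / 2 := by
      calc |∑ j : Fin (n + 1), W i a j * (h j - E q j)|
          ≤ ∑ j : Fin (n + 1), |W i a j * (h j - E q j)| :=
            Finset.abs_sum_le_sum_abs _ _
        _ ≤ ∑ _j : Fin (n + 1), 2 * c * ε := by
            refine Finset.sum_le_sum fun j _ => ?_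
            rw [abs_mul]
            exact mul_le_mul (hWb j) (hd j) (abs_nonneg _) (by positivity)
        _ = ((n : ℝ) + 1) * (2 * c * ε) := by
            rw [Finset.sum_const, Finset.card_univ, Fintype.card_fin, nsmul_eq_mul]
            push_cast; ring
        _ = c / 2 := by rw [hεdef]; field_simp; ring
    -- decompose the pre-activation
    have hsplit : ∑ j : Fin (n + 1), W i a j * h j
        = 2 * c * E t i + (∑ j : Fin (n + 1), W i a j * (h j - E q j)) := by
      have h1 : ∀ j : Fin (n + 1), W i a j * h j
          = W i a j * E q j + W i a j * (h j - E q j) := by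
        intro j; ring
      rw [Finset.sum_congr rfl fun j _ => h1 j, Finset.sum_add_distrib, hS2]
    set D := ∑ j : Fin (n + 1), W i a j * (h j - E q j) with hDdef
    show |logisticSigmoid ((∑ j : Fin (n + 1), W i a j * h j) + -c) - E t i| ≤ ε
    set x := (∑ j : Fin (n + 1), W i a j * h j) + -c with hxdef
    have hxval : x = 2 * c * E t i + D - c := by rw [hxdef, hsplit]; ring
    have hDle : D ≤ c / 2 := le_trans (le_abs_self _) hD
    have hDge : -(c / 2) ≤ D := neg_le_of_abs_le hD
    rcases hE01 t i with h0 | h1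
    · -- target value 0 : pre-activation ≤ -c/2
      have hxle : x ≤ -(c / 2) := by rw [hxval, h0]; linarith
      rw [h0, sub_zero, abs_of_pos (logisticSigmoid_pos _)]
      calc logisticSigmoid x ≤ Real.exp x := logisticSigmoid_le_exp x
        _ ≤ Real.exp (-(c / 2)) := Real.exp_le_exp.mpr hxle
        _ = ε := hexp
    · -- target value 1 : pre-activation ≥ c/2
      have hxge : c / 2 ≤ x := by rw [hxval, h1]; linarith
      rw [h1, abs_sub_comm, abs_of_nonneg (by linarith [logisticSigmoid_lt_one x])]
      calc 1 - logisticSigmoid x ≤ Real.exp (-x) := one_sub_logisticSigmoid_le_exp x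
        _ ≤ Real.exp (-(c / 2)) := Real.exp_le_exp.mpr (by linarith)
        _ = ε := hexp
  · intro q hq
    have hEq : E q (Fin.last n) = 1 := by
      simp [hEdef, (e q).isLt.ne', hq]
    rw [hEq]; linarith
  · intro q hq
    have hEq : E q (Fin.last n) = 0 := by
      simp [hEdef, (e q).isLt.ne', hq]
    rw [hEq]; linarith
end

section
/- Let Σ be a finite alphabet, P ⊆ Σ* a finite prefix-closed set containing the empty string, E ⊆ Σ* a finite suffix-closed set containing the empty string, and T : Σ* → Bool an observation function. For s ∈ P ∪ P·Σ define row(s) : E → Bool by row(s)(e) = T(s·e). Suppose the observation table is closed (for every p ∈ P and a ∈ Σ there exists p' ∈ P with row(p·a) = row(p')) and consistent (for all p₁, p₂ ∈ P with row(p₁) = row(p₂) and all a ∈ Σ, row(p₁·a) = row(p₂·a)). Then the hypothesis DFA M with state set {row(p) : p ∈ P}, start state row(ε), accepting states {row(p) : T(p) = true}, and transition function δ(row(p), a) = row(p·a) is well defined (δ does not depend on the representative p), and M is consistent with the table: for every s ∈ P ∪ P·Σ and every e ∈ E, M accepts s·e if and only if T(s·e) = true. -/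
/-- The row of a string `s` in an observation table with suffix set `E` and observation function
`T`: the function sending `e ∈ E` to `T (s ++ e)`. -/
def obsRow {A : Type} (T : List A → Bool) (E : Finset (List A)) (s : List A) :
    {e : List A // e ∈ E} → Bool :=
  fun e => T (s ++ e.1)

namespace LstarAux

variable {A : Type} (P E : Finset (List A)) (T : List A → Bool)

/-- The state type of the hypothesis DFA: rows of elements of `P`. -/
abbrev St (P E : Finset (List A)) (T : List A → Bool) :=
  {r : {e : List A // e ∈ E} → Bool // ∃ p ∈ P, obsRow T E p = r}

/-- Angluin's hypothesis DFA. -/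
noncomputable def hyp (hPe : [] ∈ P) (hEe : [] ∈ E)
    (hclosed : ∀ p ∈ P, ∀ a : A, ∃ p' ∈ P, obsRow T E (p ++ [a]) = obsRow T E p') :
    DFA A (St P E T) where
  step r a := ⟨obsRow T E (r.2.choose ++ [a]), by
    obtain ⟨p', hp', h⟩ := hclosed r.2.choose r.2.choose_spec.1 a
    exact ⟨p', hp', h.symm⟩⟩
  start := ⟨obsRow T E [], ⟨[], hPe, rfl⟩⟩
  accept := {r | r.1 ⟨[], hEe⟩ = true}

variable (hPe : [] ∈ P) (hEe : [] ∈ E)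
variable (hclosed : ∀ p ∈ P, ∀ a : A, ∃ p' ∈ P, obsRow T E (p ++ [a]) = obsRow T E p')
variable (hconsistent : ∀ p₁ ∈ P, ∀ p₂ ∈ P, obsRow T E p₁ = obsRow T E p₂ →
      ∀ a : A, obsRow T E (p₁ ++ [a]) = obsRow T E (p₂ ++ [a]))

include hconsistent in
theorem hyp_step_val (r : St P E T) (p : List A) (hp : p ∈ P)
    (hr : r.1 = obsRow T E p) (a : A) :
    ((hyp P E T hPe hEe hclosed).step r a).1 = obsRow T E (p ++ [a]) := by
  have h1 := r.2.choose_spec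
  exact hconsistent _ h1.1 p hp (h1.2.trans hr) a

include hconsistent in
theorem hyp_evalFrom_accept
    (hEsuf : ∀ e ∈ E, ∀ f : List A, f <:+ e → f ∈ E) :
    ∀ e : List A, e ∈ E → ∀ p, p ∈ P → ∀ r : St P E T, r.1 = obsRow T E p →
      ((hyp P E T hPe hEe hclosed).evalFrom r e ∈ (hyp P E T hPe hEe hclosed).accept
        ↔ T (p ++ e) = true)
  | [], _, p, hp, r, hr => by
      show r ∈ _ ↔ _
      rw [show r ∈ (hyp P E T hPe hEe hclosed).accept ↔ r.1 ⟨[], hEe⟩ = true from Iff.rfl, hr]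
      simp [obsRow]
  | a :: e', he, p, hp, r, hr => by
      obtain ⟨p', hp', hrow⟩ := hclosed p hp a
      have hstep : ((hyp P E T hPe hEe hclosed).step r a).1 = obsRow T E p' := by
        rw [hyp_step_val P E T hPe hEe hclosed hconsistent r p hp hr a, hrow]
      have he' : e' ∈ E := hEsuf _ he e' ⟨[a], rfl⟩
      have ih := hyp_evalFrom_accept hEsuf e' he' p' hp' _ hstep
      have hT : T (p' ++ e') = T (p ++ (a :: e')) := by
        have := congrFun hrow.symm ⟨e', he'⟩
        simpa [obsRow] using this
      show (hyp P E T hPe hEe hclosed).evalFrom ((hyp P E T hPe hEe hclosed).step r a) e' ∈ _ ↔ _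
      rw [ih, hT]

include hconsistent in
theorem hyp_eval_val (hPpre : ∀ p ∈ P, ∀ q : List A, q <+: p → q ∈ P) :
    ∀ p, p ∈ P → ((hyp P E T hPe hEe hclosed).eval p).1 = obsRow T E p := by
  intro p
  induction p using List.reverseRecOn with
  | nil => intro _; rfl
  | append_singleton q a ih =>
    intro hq
    have hqP : q ∈ P := hPpre _ hq q ⟨[a], rfl⟩
    rw [DFA.eval_append_singleton]
    exact hyp_step_val P E T hPe hEe hclosed hconsistent _ q hqP (ih hqP) a

end LstarAux

/-- If the observation table `(P, E, T)` (with `P` finite prefix-closed containing `ε`, `E`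
finite suffix-closed containing `ε`) is closed and consistent, then Angluin's hypothesis DFA —
whose states are the rows of elements of `P`, with start state `row ε`, transition
`δ(row p, a) = row (p ++ [a])` (well defined, i.e. independent of the representative `p`), and
accepting states the rows of those `p` with `T p = true` — exists and is consistent with the
table: for every `s ∈ P ∪ P·Σ` and every `e ∈ E`, it accepts `s ++ e` iff `T (s ++ e) = true`. -/
theorem lstar_hypothesis_dfa_consistent
    {A : Type} [Fintype A]
    (P E : Finset (List A)) (T : List A → Bool)
    (hPe : [] ∈ P)
    (hPpre : ∀ p ∈ P, ∀ q : List A, q <+: p → q ∈ P)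
    (hEe : [] ∈ E)
    (hEsuf : ∀ e ∈ E, ∀ f : List A, f <:+ e → f ∈ E)
    (hclosed : ∀ p ∈ P, ∀ a : A, ∃ p' ∈ P, obsRow T E (p ++ [a]) = obsRow T E p')
    (hconsistent : ∀ p₁ ∈ P, ∀ p₂ ∈ P, obsRow T E p₁ = obsRow T E p₂ →
      ∀ a : A, obsRow T E (p₁ ++ [a]) = obsRow T E (p₂ ++ [a])) :
    ∃ M : DFA A {r : {e : List A // e ∈ E} → Bool // ∃ p ∈ P, obsRow T E p = r},
      -- the start state is `row ε`
      M.start = ⟨obsRow T E [], ⟨[], hPe, rfl⟩⟩ ∧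
      -- the transition function is well defined on rows and satisfies
      -- `δ(row p, a) = row (p ++ [a])` for every representative `p ∈ P`
      (∀ p (hp : p ∈ P) (a : A),
        (M.step ⟨obsRow T E p, ⟨p, hp, rfl⟩⟩ a).1 = obsRow T E (p ++ [a])) ∧
      -- the accepting states are exactly the rows of those `p ∈ P` with `T p = true`
      (∀ p (hp : p ∈ P),
        ((⟨obsRow T E p, ⟨p, hp, rfl⟩⟩ :
          {r : {e : List A // e ∈ E} → Bool // ∃ p ∈ P, obsRow T E p = r}) ∈ M.accept
          ↔ T p = true)) ∧
      -- `M` is consistent with the observation table on `(P ∪ P·Σ) · E`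
      (∀ s : List A, (s ∈ P ∨ ∃ p ∈ P, ∃ a : A, s = p ++ [a]) →
        ∀ e ∈ E, (s ++ e ∈ M.accepts ↔ T (s ++ e) = true)) := by
  classical
  refine ⟨LstarAux.hyp P E T hPe hEe hclosed, rfl, ?_, ?_, ?_⟩
  · intro p hp a
    exact LstarAux.hyp_step_val P E T hPe hEe hclosed hconsistent _ p hp rfl a
  · intro p hp
    show obsRow T E p ⟨[], hEe⟩ = true ↔ T p = true
    simp [obsRow]
  · intro s hs e he
    set M := LstarAux.hyp P E T hPe hEe hclosed with hM
    rw [DFA.mem_accepts, DFA.eval, DFA.evalFrom_of_append]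
    rcases hs with hsP | ⟨p, hp, a, rfl⟩
    · exact LstarAux.hyp_evalFrom_accept P E T hPe hEe hclosed hconsistent hEsuf e he s hsP _
        (LstarAux.hyp_eval_val P E T hPe hEe hclosed hconsistent hPpre s hsP)
    · obtain ⟨p', hp', hrow⟩ := hclosed p hp a
      have hev : (M.evalFrom M.start (p ++ [a])).1 = obsRow T E p' := by
        show (M.eval (p ++ [a])).1 = _
        rw [DFA.eval_append_singleton]
        rw [LstarAux.hyp_step_val P E T hPe hEe hclosed hconsistent _ p hp
          (LstarAux.hyp_eval_val P E T hPe hEe hclosed hconsistent hPpre p hp) a, hrow]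
      have hT : T (p' ++ e) = T (p ++ [a] ++ e) := by
        have := congrFun hrow.symm ⟨e, he⟩
        simpa [obsRow] using this
      rw [LstarAux.hyp_evalFrom_accept P E T hPe hEe hclosed hconsistent hEsuf e he p' hp' _ hev,
        hT]
end
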